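/- If an S-sides Letter Boxed puzzle (Σ, D, Γ₁, …, Γ_S) in which every multiset Γᵢ has size n admits a solution, then it admits a solution of length at most S²·|Σ|·n. -/

import Mathlib

/-!
Letter Boxed with `S` sides: alphabet a type `A`, dictionary `D : Finset (List A)`
(of nonempty words), sides `Γ : Fin S → Multiset A`.

A solution is a list of words `ws` (each in `D`, consecutive words linked
last-letter-to-first-letter) together with a side assignment `sides : ℕ → Fin S`
for the positions of the concatenation `σ = ws.flatten`, such that consecutive positions
lie on different sides (except across word boundaries, where the side is repeated),
every position lies on its assigned side, and every character of every side is covered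
the required number of times.
-/

/-- Position `j` (0-based) of the concatenation of `ws` is the last character of one
of the words of `ws`. -/
def WordEnd {A : Type} (ws : List (List A)) (j : ℕ) : Prop :=
  ∃ t < ws.length, j + 1 = ((ws.take (t + 1)).map List.length).sum

/-- `(ws, sides)` is a solution of the Letter Boxed puzzle with dictionary `D` and
sides `Γ`.  The four conditions are the linking condition between consecutive words,
the alternation condition on sides, the membership condition, and the covering
condition. -/
def IsLBSolution {S : ℕ} {A : Type} [DecidableEq A]
    (D : Finset (List A)) (Γ : Fin S → Multiset A)
    (ws : List (List A)) (sides : ℕ → Fin S) : Prop :=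
  (∀ w ∈ ws, w ∈ D) ∧
  (∀ i : ℕ, i + 1 < ws.length → (ws.getD i []).getLast? = (ws.getD (i + 1) []).head?) ∧
  (∀ j : ℕ, j + 1 < ws.flatten.length →
    ((WordEnd ws j → sides j = sides (j + 1)) ∧ (¬ WordEnd ws j → sides j ≠ sides (j + 1)))) ∧
  (∀ (j : ℕ) (h : j < ws.flatten.length), ws.flatten.get ⟨j, h⟩ ∈ Γ (sides j)) ∧
  (∀ (i : Fin S) (γ : A),
    (Γ i).count γ ≤
      {j : ℕ | ∃ h : j < ws.flatten.length, ws.flatten.get ⟨j, h⟩ = γ ∧ sides j = i ∧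
        (j + 1 = ws.flatten.length ∨ ¬ WordEnd ws j)}.ncard)

namespace LBAux

variable {A : Type}

/-- prefix sum of word lengths -/
def P (ws : List (List A)) (t : ℕ) : ℕ := ((ws.take t).map List.length).sum

lemma wordEnd_iff (ws : List (List A)) (j : ℕ) :
    WordEnd ws j ↔ ∃ t < ws.length, j + 1 = P ws (t + 1) := Iff.rfl

lemma P_zero (ws : List (List A)) : P ws 0 = 0 := rfl

lemma sum_take_mono (l : List ℕ) {s t : ℕ} (h : s ≤ t) : (l.take s).sum ≤ (l.take t).sum := by
  conv_rhs => rw [← List.take_append_drop s (l.take t)]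
  rw [List.sum_append, List.take_take, min_eq_left h]
  exact Nat.le_add_right _ _

lemma P_eq (ws : List (List A)) (t : ℕ) : P ws t = ((ws.map List.length).take t).sum := by
  rw [P, List.map_take]

lemma P_mono {ws : List (List A)} {s t : ℕ} (h : s ≤ t) : P ws s ≤ P ws t := by
  rw [P_eq, P_eq]; exact sum_take_mono _ h

lemma P_succ (ws : List (List A)) {t : ℕ} (ht : t < ws.length) :
    P ws (t + 1) = P ws t + (ws.getD t []).length := by
  unfold P
  rw [List.take_succ, List.map_append, List.sum_append, List.getElem?_eq_getElem ht,
    List.getD_eq_getElem?_getD, List.getElem?_eq_getElem ht]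
  simp

lemma P_le_flatten (ws : List (List A)) (t : ℕ) : P ws t ≤ ws.flatten.length := by
  rw [List.length_flatten, P_eq]
  conv_rhs => rw [← List.take_append_drop t (ws.map List.length)]
  rw [List.sum_append]
  exact Nat.le_add_right _ _

lemma P_full (ws : List (List A)) : P ws ws.length = ws.flatten.length := by
  rw [P, List.take_length, List.length_flatten]

lemma P_lt_succ {ws : List (List A)} {t : ℕ} (ht : t < ws.length)
    (hnil : ws.getD t [] ≠ []) : P ws t < P ws (t + 1) := by
  rw [P_succ ws ht]
  have := List.length_pos_iff.mpr hnil
  omega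

lemma getD_ne_of_nil {ws : List (List A)} (hnil : ∀ w ∈ ws, w ≠ []) {t : ℕ}
    (ht : t < ws.length) : ws.getD t [] ≠ [] := by
  rw [List.getD_eq_getElem?_getD, List.getElem?_eq_getElem ht]
  exact hnil _ (List.getElem_mem ht)

lemma P_lt_flatten {ws : List (List A)} (hnil : ∀ w ∈ ws, w ≠ []) {t : ℕ}
    (ht : t < ws.length) : P ws t < ws.flatten.length := by
  have h1 := P_lt_succ ht (getD_ne_of_nil hnil ht)
  have h2 := P_le_flatten ws (t + 1)
  omega

lemma P_append_le {a c : List (List A)} {t : ℕ} (h : t ≤ a.length) :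
    P (a ++ c) t = P a t := by
  unfold P
  rw [List.take_append, Nat.sub_eq_zero_of_le h, List.take_zero,
    List.append_nil]

lemma P_append_add (a c : List (List A)) (s : ℕ) :
    P (a ++ c) (a.length + s) = a.flatten.length + P c s := by
  unfold P
  rw [List.take_append, List.take_of_length_le (by omega),
    Nat.add_sub_cancel_left, List.map_append, List.sum_append, List.length_flatten]

lemma flatten_ne_nil {b : List (List A)} (hb : b ≠ []) (hnil : ∀ w ∈ b, w ≠ []) :
    1 ≤ b.flatten.length := by
  cases b with
  | nil => exact absurd rfl hb
  | cons w bs =>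
    have := List.length_pos_iff.mpr (hnil w (by simp))
    simp only [List.flatten_cons, List.length_append]
    omega

lemma exists_idx (ws : List (List A)) (j : ℕ) (hj : j < ws.flatten.length) :
    ∃ t < ws.length, P ws t ≤ j ∧ j < P ws (t + 1) := by
  induction ws generalizing j with
  | nil => simp at hj
  | cons w rest ih =>
    rcases Nat.lt_or_ge j w.length with h | h
    · exact ⟨0, by simp, by simp [P], by simpa [P] using h⟩
    · have hj' : j - w.length < rest.flatten.length := by
        simp only [List.flatten_cons, List.length_append] at hj; omega
      obtain ⟨t, ht, h1, h2⟩ := ih (j - w.length) hj'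
      refine ⟨t + 1, by simpa using ht, ?_, ?_⟩
      · have : P (w :: rest) (t + 1) = w.length + P rest t := rfl
        omega
      · have : P (w :: rest) (t + 1 + 1) = w.length + P rest (t + 1) := rfl
        omega

lemma idx_unique {ws : List (List A)} {j t t' : ℕ} (h1 : P ws t ≤ j) (h2 : j < P ws (t + 1))
    (h1' : P ws t' ≤ j) (h2' : j < P ws (t' + 1)) : t = t' := by
  by_contra hne
  rcases Nat.lt_or_ge t t' with h | h
  · have := P_mono (ws := ws) (show t + 1 ≤ t' by omega); omega
  · have := P_mono (ws := ws) (show t' + 1 ≤ t by omega); omega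

lemma wordEnd_append_left {a c : List (List A)} (hc : ∀ w ∈ c, w ≠ []) {j : ℕ}
    (hj : j + 1 ≤ a.flatten.length) : WordEnd (a ++ c) j ↔ WordEnd a j := by
  rw [wordEnd_iff, wordEnd_iff]
  constructor
  · rintro ⟨t, ht, hte⟩
    rcases Nat.lt_or_ge t a.length with h | h
    · exact ⟨t, h, by rw [hte, P_append_le (by omega)]⟩
    · exfalso
      have hclen : 0 < c.length := by
        rw [List.length_append] at ht; omega
      have hPc1 : 1 ≤ P c 1 := by
        have hPs : P c 1 = (c.getD 0 []).length := by simpa [P_zero] using P_succ c hclen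
        have := List.length_pos_iff.mpr (getD_ne_of_nil hc hclen)
        omega
      have he : t + 1 = a.length + (t + 1 - a.length) := by omega
      rw [he, P_append_add] at hte
      have : P c 1 ≤ P c (t + 1 - a.length) := P_mono (by omega)
      omega
  · rintro ⟨t, ht, hte⟩
    exact ⟨t, by rw [List.length_append]; omega, by rw [hte, P_append_le (by omega)]⟩

lemma wordEnd_append_right (a c : List (List A)) (j : ℕ) :
    WordEnd (a ++ c) (a.flatten.length + j) ↔ WordEnd c j := by
  rw [wordEnd_iff, wordEnd_iff]
  constructor
  · rintro ⟨t, ht, hte⟩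
    rcases Nat.lt_or_ge t a.length with h | h
    · exfalso
      have h1 : P (a ++ c) (t + 1) = P a (t + 1) := P_append_le (by omega)
      have h2 : P a (t + 1) ≤ a.flatten.length := P_le_flatten a (t + 1)
      omega
    · refine ⟨t - a.length, by rw [List.length_append] at ht; omega, ?_⟩
      have he : t + 1 = a.length + (t - a.length + 1) := by omega
      rw [he, P_append_add] at hte
      omega
  · rintro ⟨s, hs, hse⟩
    refine ⟨a.length + s, by rw [List.length_append]; omega, ?_⟩
    rw [show a.length + s + 1 = a.length + (s + 1) by omega, P_append_add]
    omega

lemma take_flatten_length (ws : List (List A)) (t : ℕ) :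
    (ws.take t).flatten.length = P ws t := by
  rw [List.length_flatten]; rfl

lemma head?_getD {ws : List (List A)} (hnil : ∀ w ∈ ws, w ≠ []) {t : ℕ}
    (ht : t < ws.length) : (ws.getD t []).head? = ws.flatten[P ws t]? := by
  have h1 : ws.getD t [] = ws[t] := by
    rw [List.getD_eq_getElem?_getD, List.getElem?_eq_getElem ht]; rfl
  have h2 : ws.flatten = (ws.take t).flatten ++ (ws[t] :: ws.drop (t + 1)).flatten := by
    rw [← List.flatten_append, ← List.drop_eq_getElem_cons ht, List.take_append_drop]
  have h3 : (ws.take t).flatten.length = P ws t := take_flatten_length ws t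
  have h4 : ws[t] ≠ [] := hnil _ (List.getElem_mem ht)
  rw [h1, h2, List.head?_eq_getElem?, List.getElem?_append_right (by omega), h3,
    Nat.sub_self, List.flatten_cons, List.getElem?_append,
    if_pos (List.length_pos_iff.mpr h4)]

end LBAux

namespace LBAux

variable {A : Type}

/-- the witness predicate of the covering condition -/
def Wit {S : ℕ} (ws : List (List A)) (sides : ℕ → Fin S) (γ : A) (i : Fin S) (j : ℕ) : Prop :=
  ∃ h : j < ws.flatten.length, ws.flatten.get ⟨j, h⟩ = γ ∧ sides j = i ∧
    (j + 1 = ws.flatten.length ∨ ¬ WordEnd ws j)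

lemma cond5_iff {S : ℕ} [DecidableEq A] {Γ : Fin S → Multiset A}
    (ws : List (List A)) (sides : ℕ → Fin S) (i : Fin S) (γ : A) :
    {j : ℕ | ∃ h : j < ws.flatten.length, ws.flatten.get ⟨j, h⟩ = γ ∧ sides j = i ∧
        (j + 1 = ws.flatten.length ∨ ¬ WordEnd ws j)} = {j : ℕ | Wit ws sides γ i j} := rfl

lemma wit_finite {S : ℕ} (ws : List (List A)) (sides : ℕ → Fin S) (γ : A) (i : Fin S) :
    {j : ℕ | Wit ws sides γ i j}.Finite :=
  (Set.finite_Iio ws.flatten.length).subset (by rintro j ⟨h, -⟩; exact h)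

lemma delete_suffix {S : ℕ} [DecidableEq A] {D : Finset (List A)} {Γ : Fin S → Multiset A}
    {a b : List (List A)} {sides : ℕ → Fin S}
    (hnil : ∀ w ∈ a ++ b, w ≠ []) (hb : b ≠ [])
    (hsol : IsLBSolution D Γ (a ++ b) sides)
    (hwit : ∀ (i : Fin S) (γ : A), (Γ i).count γ ≤
      {j : ℕ | Wit (a ++ b) sides γ i j ∧ j < a.flatten.length}.ncard) :
    IsLBSolution D Γ a sides := by
  obtain ⟨h1, h2, h3, h4, h5⟩ := hsol
  have hbnil : ∀ w ∈ b, w ≠ [] := fun w hw => hnil w (by simp [hw])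
  have hbl : 1 ≤ b.flatten.length := flatten_ne_nil hb hbnil
  have hlen : (a ++ b).flatten.length = a.flatten.length + b.flatten.length := by simp
  have hget : ∀ (j : ℕ) (hj : j < a.flatten.length),
      (a ++ b).flatten[j]'(by omega) = a.flatten[j]'hj := by
    intro j hj
    have e : (a ++ b).flatten[j]? = a.flatten[j]? := by
      rw [List.flatten_append, List.getElem?_append, if_pos hj]
    rw [List.getElem?_eq_getElem (by omega : j < (a ++ b).flatten.length),
      List.getElem?_eq_getElem hj] at e
    exact Option.some.inj e
  refine ⟨fun w hw => h1 w (by simp [hw]), ?_, ?_, ?_, ?_⟩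
  · intro i hi
    have hi' : i + 1 < (a ++ b).length := by rw [List.length_append]; omega
    have := h2 i hi'
    rwa [List.getD_append _ _ _ _ (by omega), List.getD_append _ _ _ _ (by omega)] at this
  · intro j hj
    have hwe : WordEnd (a ++ b) j ↔ WordEnd a j := wordEnd_append_left hbnil (by omega)
    have := h3 j (by omega)
    exact ⟨fun hw => this.1 (hwe.mpr hw), fun hw => this.2 fun hw' => hw (hwe.mp hw')⟩
  · intro j hj
    have := h4 j (by omega)
    simp only [List.get_eq_getElem] at this ⊢
    rwa [hget j hj] at this
  · intro i γ
    refine le_trans (hwit i γ) (Set.ncard_le_ncard ?_ ((wit_finite a sides γ i).subset ?_))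
    · rintro j ⟨⟨hjlt, hγ, hsd, hlast⟩, hja⟩
      refine ⟨hja, ?_, hsd, ?_⟩
      · simp only [List.get_eq_getElem] at hγ ⊢
        rwa [hget j hja] at hγ
      · right
        intro hw
        rcases hlast with h | h
        · omega
        · exact h ((wordEnd_append_left hbnil (by omega)).mpr hw)
    · exact fun j hj => hj

lemma delete_middle {S : ℕ} [DecidableEq A] {D : Finset (List A)} {Γ : Fin S → Multiset A}
    {a b c : List (List A)} {sides : ℕ → Fin S}
    (hnil : ∀ w ∈ a ++ b ++ c, w ≠ []) (hb : b ≠ []) (hc : c ≠ [])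
    (hsol : IsLBSolution D Γ (a ++ b ++ c) sides)
    (hchar : (a ++ b ++ c).flatten[a.flatten.length]? =
      (a ++ b ++ c).flatten[a.flatten.length + b.flatten.length]?)
    (hside : sides a.flatten.length = sides (a.flatten.length + b.flatten.length))
    (hwit : ∀ (i : Fin S) (γ : A), (Γ i).count γ ≤
      {j : ℕ | Wit (a ++ b ++ c) sides γ i j ∧
        (j < a.flatten.length ∨ a.flatten.length + b.flatten.length ≤ j)}.ncard) :
    IsLBSolution D Γ (a ++ c)
      (fun j => if j < a.flatten.length then sides j else sides (j + b.flatten.length)) := by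
  obtain ⟨h1, h2, h3, h4, h5⟩ := hsol
  set al := a.flatten.length with hal
  set bl := b.flatten.length with hbl
  set cl := c.flatten.length with hcl
  set sides' : ℕ → Fin S := fun j => if j < al then sides j else sides (j + bl) with hsides'
  have hanil : ∀ w ∈ a, w ≠ [] := fun w hw => hnil w (by simp [hw])
  have hbnil : ∀ w ∈ b, w ≠ [] := fun w hw => hnil w (by simp [hw])
  have hcnil : ∀ w ∈ c, w ≠ [] := fun w hw => hnil w (by simp [hw])
  have hbcnil : ∀ w ∈ b ++ c, w ≠ [] := fun w hw => by
    rcases List.mem_append.mp hw with h | h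
    exacts [hbnil w h, hcnil w h]
  have hacnil : ∀ w ∈ a ++ c, w ≠ [] := fun w hw => by
    rcases List.mem_append.mp hw with h | h
    exacts [hanil w h, hcnil w h]
  have hbl1 : 1 ≤ bl := flatten_ne_nil hb hbnil
  have hcl1 : 1 ≤ cl := flatten_ne_nil hc hcnil
  have htot : (a ++ b ++ c).flatten.length = al + bl + cl := by
    simp [hal, hbl, hcl]; omega
  have htot' : (a ++ c).flatten.length = al + cl := by simp [hal, hcl]
  have habl : (a ++ b).flatten.length = al + bl := by simp [hal, hbl]
  -- getElem? facts
  have hget?1 : ∀ j, j < al → (a ++ c).flatten[j]? = (a ++ b ++ c).flatten[j]? := by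
    intro j hj
    rw [List.flatten_append, List.flatten_append, List.flatten_append,
      List.getElem?_append, List.getElem?_append, List.getElem?_append]
    rw [if_pos (by simpa [← hal] using hj), if_pos (show j < al by exact hj),
      if_pos (by simp [← hal]; omega)]
  have hget?2 : ∀ j, al ≤ j → (a ++ c).flatten[j]? = (a ++ b ++ c).flatten[j + bl]? := by
    intro j hj
    rw [List.flatten_append, List.flatten_append, List.flatten_append,
      List.getElem?_append (l₁ := a.flatten), if_neg (by omega),
      List.getElem?_append (l₁ := a.flatten ++ b.flatten)]
    rw [if_neg (by simp [← hal, ← hbl]; omega)]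
    have e1 : j - a.flatten.length = j - al := rfl
    have e2 : j + bl - (a.flatten ++ b.flatten).length = j - al := by
      simp only [List.length_append, ← hal, ← hbl]; omega
    rw [e2]
  -- getElem (with proofs) versions
  have hget1 : ∀ (j : ℕ) (hj : j < al),
      (a ++ c).flatten[j]'(by omega) = (a ++ b ++ c).flatten[j]'(by omega) := by
    intro j hj
    have e := hget?1 j hj
    rw [List.getElem?_eq_getElem (by omega : j < (a ++ c).flatten.length),
      List.getElem?_eq_getElem (by omega : j < (a ++ b ++ c).flatten.length)] at e
    exact Option.some.inj e
  have hget2 : ∀ (j : ℕ) (hj1 : al ≤ j) (hj2 : j < al + cl),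
      (a ++ c).flatten[j]'(by omega) = (a ++ b ++ c).flatten[j + bl]'(by omega) := by
    intro j hj1 hj2
    have e := hget?2 j hj1
    rw [List.getElem?_eq_getElem (by omega : j < (a ++ c).flatten.length),
      List.getElem?_eq_getElem (by omega : j + bl < (a ++ b ++ c).flatten.length)] at e
    exact Option.some.inj e
  -- WordEnd transfer
  have hwe1 : ∀ j, j + 1 ≤ al → (WordEnd (a ++ c) j ↔ WordEnd (a ++ b ++ c) j) := by
    intro j hj
    rw [wordEnd_append_left hcnil (by omega), List.append_assoc,
      wordEnd_append_left hbcnil (by omega)]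
  have hwe2 : ∀ j, (WordEnd (a ++ c) (al + j) ↔ WordEnd (a ++ b ++ c) (al + bl + j)) := by
    intro j
    rw [show al + bl + j = (a ++ b).flatten.length + j by omega]
    rw [wordEnd_append_right (a ++ b) c j]
    exact wordEnd_append_right a c j
  refine ⟨fun w hw => h1 w (by rcases List.mem_append.mp hw with h | h <;> simp [h]), ?_, ?_, ?_, ?_⟩
  · -- linking
    intro i hi
    rw [List.length_append] at hi
    rcases Nat.lt_or_ge (i + 1) a.length with h | h
    · have e1 : (a ++ c).getD i [] = (a ++ b ++ c).getD i [] := by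
        rw [List.getD_append a c [] i (by omega), List.getD_append (a ++ b) c [] i (by simp; omega),
          List.getD_append a b [] i (by omega)]
      have e2 : (a ++ c).getD (i + 1) [] = (a ++ b ++ c).getD (i + 1) [] := by
        rw [List.getD_append a c [] (i + 1) (by omega),
          List.getD_append (a ++ b) c [] (i + 1) (by simp; omega),
          List.getD_append a b [] (i + 1) (by omega)]
      rw [e1, e2]
      exact h2 i (by simp; omega)
    rcases Nat.lt_or_ge i a.length with h' | h'
    · -- i + 1 = a.length : the junction
      have hia : i + 1 = a.length := by omega
      have hblen : 0 < b.length := List.length_pos_iff.mpr hb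
      have hclen : 0 < c.length := List.length_pos_iff.mpr hc
      have hlen3 : (a ++ b ++ c).length = a.length + b.length + c.length := by simp; omega
      -- left word
      have e1 : (a ++ c).getD i [] = (a ++ b ++ c).getD i [] := by
        rw [List.getD_append _ _ _ _ (by omega), List.getD_append _ _ _ _ (by simp; omega),
          List.getD_append _ _ _ _ (by omega)]
      -- original linking at i
      have hlink := h2 i (by omega)
      -- head of word a.length in a++b++c is char at al
      have hh1 : ((a ++ b ++ c).getD a.length []).head? = (a ++ b ++ c).flatten[P (a ++ b ++ c) a.length]? :=
        head?_getD hnil (by omega)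
      have hP1 : P (a ++ b ++ c) a.length = al := by
        rw [P_append_le (by simp), P_append_le (le_refl _), P_full]
      -- head of word (a++b).length is char at al+bl
      have hh2 : ((a ++ b ++ c).getD (a ++ b).length []).head? =
          (a ++ b ++ c).flatten[P (a ++ b ++ c) (a ++ b).length]? :=
        head?_getD hnil (by simp; omega)
      have hP2 : P (a ++ b ++ c) (a ++ b).length = al + bl := by
        rw [P_append_le (le_refl _), P_full, habl]
      -- right word of (a++c) at position i+1 = a.length is c.getD 0
      have e2 : (a ++ c).getD (i + 1) [] = (a ++ b ++ c).getD (a ++ b).length [] := by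
        rw [hia, List.getD_append_right _ _ _ _ (by omega),
          List.getD_append_right _ _ _ _ (by simp), Nat.sub_self]
        congr 1
        simp
      rw [e1, e2, hlink, hia]
      rw [show (a ++ b ++ c).getD a.length [] = (a ++ b ++ c).getD (a.length) [] from rfl]
      rw [hh2, hP2, ← hchar, ← hP1, ← hh1]
    · -- i ≥ a.length
      have := h2 (i + b.length) (by simp; omega)
      have e1 : (a ++ b ++ c).getD (i + b.length) [] = (a ++ c).getD i [] := by
        rw [List.getD_append_right _ _ _ _ (by simp; omega),
          List.getD_append_right _ _ _ _ (by omega)]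
        congr 1
        simp
        omega
      have e2 : (a ++ b ++ c).getD (i + b.length + 1) [] = (a ++ c).getD (i + 1) [] := by
        rw [List.getD_append_right _ _ _ _ (by simp; omega),
          List.getD_append_right _ _ _ _ (by omega)]
        congr 1
        simp
        omega
      rwa [e1, e2] at this
  · -- alternation
    intro j hj
    rw [htot'] at hj
    rcases Nat.lt_or_ge (j + 1) al with h | h
    · have hwe := hwe1 j (by omega)
      have := h3 j (by omega)
      have es : sides' j = sides j := if_pos (by omega)
      have es' : sides' (j + 1) = sides (j + 1) := if_pos (by omega)
      rw [es, es']
      exact ⟨fun hw => this.1 (hwe.mp hw), fun hw => this.2 fun hw' => hw (hwe.mpr hw')⟩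
    rcases Nat.lt_or_ge j al with h' | h'
    · -- j + 1 = al
      have hja : j + 1 = al := by omega
      have hwend : WordEnd (a ++ c) j := by
        have ha : a ≠ [] := by
          intro hae
          rw [hal, hae] at hja
          simp at hja
        refine (wordEnd_append_left hcnil (by omega)).mpr ⟨a.length - 1, ?_, ?_⟩
        · have := List.length_pos_iff.mpr ha; omega
        · rw [show a.length - 1 + 1 = a.length by have := List.length_pos_iff.mpr ha; omega]
          exact hja.trans (P_full a).symm
      have hwendo : WordEnd (a ++ b ++ c) j := (hwe1 j (by omega)).mp hwend
      have es : sides' j = sides j := if_pos (by omega)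
      have es' : sides' (j + 1) = sides (al + bl) := by
        rw [hja]; exact if_neg (by omega)
      refine ⟨fun _ => ?_, fun hw => absurd hwend hw⟩
      have h3j := (h3 j (by omega)).1 hwendo
      rw [es, es', h3j, hja, ← hside]
    · -- al ≤ j
      have hjj : j = al + (j - al) := by omega
      have hwe := hwe2 (j - al)
      rw [← hjj, show al + bl + (j - al) = j + bl by omega] at hwe
      have := h3 (j + bl) (by omega)
      have es : sides' j = sides (j + bl) := if_neg (by omega)
      have es' : sides' (j + 1) = sides (j + 1 + bl) := if_neg (by omega)
      rw [es, es', show j + 1 + bl = j + bl + 1 by omega]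
      exact ⟨fun hw => this.1 (hwe.mp hw), fun hw => this.2 fun hw' => hw (hwe.mpr hw')⟩
  · -- membership
    intro j hj
    have hj' : j < al + cl := by omega
    simp only [List.get_eq_getElem]
    rcases Nat.lt_or_ge j al with h | h
    · rw [hget1 j h, show sides' j = sides j from if_pos h]
      simpa using h4 j (by omega)
    · rw [hget2 j h (by omega), show sides' j = sides (j + bl) from if_neg (by omega)]
      simpa using h4 (j + bl) (by omega)
  · -- covering
    intro i γ
    have hfin : {j : ℕ | Wit (a ++ c) sides' γ i j}.Finite := wit_finite _ _ _ _
    refine le_trans (hwit i γ) ?_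
    set Sr := {j : ℕ | Wit (a ++ b ++ c) sides γ i j ∧ (j < al ∨ al + bl ≤ j)} with hSr
    set φ : ℕ → ℕ := fun j => if j < al then j else j - bl with hφ
    have hinj : Set.InjOn φ Sr := by
      intro j1 hj1 j2 hj2 he
      have hb1 := hj1.2
      have hb2 := hj2.2
      simp only [hφ] at he
      rcases hb1 with hb1 | hb1 <;> rcases hb2 with hb2 | hb2 <;> split_ifs at he <;> omega
    have himg : φ '' Sr ⊆ {j : ℕ | Wit (a ++ c) sides' γ i j} := by
      rintro x ⟨j, hjSr, rfl⟩
      obtain ⟨⟨hjlt, hγ, hsd, hlast⟩, hside2⟩ := hjSr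
      rcases hside2 with h | h
      · rw [show φ j = j from if_pos h]
        refine ⟨by omega, ?_, ?_, ?_⟩
        · simp only [List.get_eq_getElem] at hγ ⊢
          rw [hget1 j h]
          exact hγ
        · exact (show sides' j = sides j from if_pos h).trans hsd
        · right
          intro hw
          rcases hlast with hl | hl
          · omega
          · exact hl ((hwe1 j (by omega)).mp hw)
      · rw [show φ j = j - bl from if_neg (by omega)]
        refine ⟨by omega, ?_, ?_, ?_⟩
        · simp only [List.get_eq_getElem] at hγ ⊢
          have e := hget?2 (j - bl) (by omega)
          rw [show j - bl + bl = j by omega] at e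
          rw [List.getElem?_eq_getElem (show j - bl < (a ++ c).flatten.length by omega),
            List.getElem?_eq_getElem hjlt] at e
          exact (Option.some.inj e).trans hγ
        · have e : sides' (j - bl) = sides (j - bl + bl) := if_neg (by omega)
          rw [show j - bl + bl = j by omega] at e
          exact e.trans hsd
        · rcases hlast with hl | hl
          · left
            omega
          · right
            intro hw
            have hwe := hwe2 (j - bl - al)
            rw [show al + (j - bl - al) = j - bl by omega,
              show al + bl + (j - bl - al) = j by omega] at hwe
            exact hl (hwe.mp hw)
    calc Sr.ncard = (φ '' Sr).ncard := (Set.ncard_image_of_injOn hinj).symm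
      _ ≤ _ := Set.ncard_le_ncard himg hfin

end LBAux

namespace LBAux

variable {A : Type}

lemma sum_count_eq {n : ℕ} [Fintype A] [DecidableEq A] (m : Multiset A)
    (hm : Multiset.card m = n) : ∑ γ : A, m.count γ = n := by
  rw [← hm, ← Multiset.toFinset_sum_count_eq m]
  exact (Finset.sum_subset (Finset.subset_univ _)
    (fun x _ hx => Multiset.count_eq_zero.mpr (by simpa using hx))).symm

lemma shrink {S n : ℕ} [Fintype A] [DecidableEq A] {D : Finset (List A)}
    (hD : ∀ w ∈ D, w ≠ []) {Γ : Fin S → Multiset A} (hΓ : ∀ i, Multiset.card (Γ i) = n)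
    {ws : List (List A)} {sides : ℕ → Fin S} (hsol : IsLBSolution D Γ ws sides)
    (hlong : S ^ 2 * Fintype.card A * n < ws.length) :
    ∃ (ws' : List (List A)) (sides' : ℕ → Fin S),
      ws'.length < ws.length ∧ IsLBSolution D Γ ws' sides' := by
  classical
  have hnil : ∀ w ∈ ws, w ≠ [] := fun w hw => hD w (hsol.1 w hw)
  have h5 := hsol.2.2.2.2
  set T := ws.length with hT
  have hT1 : 1 ≤ T := by omega
  -- witness finsets
  have hW : ∀ (i : Fin S) (γ : A), ∃ W : Finset ℕ,
      (∀ j ∈ W, Wit ws sides γ i j) ∧ W.card = (Γ i).count γ := by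
    intro i γ
    have h5' : (Γ i).count γ ≤ {j : ℕ | Wit ws sides γ i j}.ncard := h5 i γ
    obtain ⟨t, hts, htc⟩ := Set.exists_subset_card_eq h5'
    have htf : t.Finite := (wit_finite ws sides γ i).subset hts
    refine ⟨htf.toFinset, fun j hj => hts (htf.mem_toFinset.mp hj), ?_⟩
    rw [← htc, Set.ncard_eq_toFinset_card t htf]
  choose W hWmem hWcard using hW
  -- the word index of a position
  have hidx : ∀ j : ℕ, ∃ t : ℕ, j < ws.flatten.length →
      t < T ∧ P ws t ≤ j ∧ j < P ws (t + 1) := by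
    intro j
    by_cases hj : j < ws.flatten.length
    · obtain ⟨t, h1, h2⟩ := exists_idx ws j hj
      exact ⟨t, fun _ => ⟨h1, h2⟩⟩
    · exact ⟨0, fun h => absurd h hj⟩
  choose idxf hidxf using hidx
  -- essential word indices
  set E : Finset ℕ := (Finset.range T).filter
    (fun t => ∃ i : Fin S, ∃ γ : A, ∃ j ∈ W i γ, P ws t ≤ j ∧ j < P ws (t + 1)) with hE
  have hWlt : ∀ (i : Fin S) (γ : A) (j : ℕ), j ∈ W i γ → j < ws.flatten.length :=
    fun i γ j hj => (hWmem i γ j hj).1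
  have hidxE : ∀ (i : Fin S) (γ : A) (j : ℕ), j ∈ W i γ → idxf j ∈ E ∧
      P ws (idxf j) ≤ j ∧ j < P ws (idxf j + 1) := by
    intro i γ j hj
    have hjlt := hWlt i γ j hj
    obtain ⟨ht, h1, h2⟩ := hidxf j hjlt
    exact ⟨Finset.mem_filter.mpr ⟨Finset.mem_range.mpr ht, i, γ, j, hj, h1, h2⟩, h1, h2⟩
  -- bound on the number of essential indices
  have hEcard : E.card ≤ S * n := by
    have h1 : E.card ≤ (Finset.univ.biUnion (fun p : Fin S × A => W p.1 p.2)).card := by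
      apply Finset.card_le_card_of_surjOn idxf
      intro t ht
      simp only [Finset.coe_filter, Set.mem_setOf_eq, hE, Finset.mem_coe,
        Finset.mem_filter, Finset.mem_range] at ht
      obtain ⟨htT, i, γ, j, hj, hj1, hj2⟩ := ht
      refine ⟨j, ?_, ?_⟩
      · simp only [Finset.coe_biUnion, Finset.mem_coe, Finset.mem_univ, Set.mem_iUnion]
        exact ⟨(i, γ), trivial, hj⟩
      · obtain ⟨ht', h1', h2'⟩ := hidxf j (hWlt i γ j hj)
        exact idx_unique h1' h2' hj1 hj2
    have h2 : (Finset.univ.biUnion (fun p : Fin S × A => W p.1 p.2)).card ≤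
        ∑ p : Fin S × A, (W p.1 p.2).card := Finset.card_biUnion_le
    have h3 : ∑ p : Fin S × A, (W p.1 p.2).card = S * n := by
      rw [Fintype.sum_prod_type]
      have : ∀ i : Fin S, ∑ γ : A, (W i γ).card = n := by
        intro i
        calc ∑ γ : A, (W i γ).card = ∑ γ : A, (Γ i).count γ := by
              exact Finset.sum_congr rfl fun γ _ => hWcard i γ
          _ = n := sum_count_eq (Γ i) (hΓ i)
      rw [Finset.sum_congr rfl fun i _ => this i]
      simp [Finset.sum_const, mul_comm]
    omega
  rcases Finset.eq_empty_or_nonempty E with hEe | hEne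
  · -- no witnesses at all: the empty solution works
    refine ⟨[], sides, by simp; omega, ?_, ?_, ?_, ?_, ?_⟩ <;> try (intro x hx; simp at hx)
    intro i γ
    have : W i γ = ∅ := by
      by_contra hne
      obtain ⟨j, hj⟩ := Finset.nonempty_of_ne_empty hne
      have := (hidxE i γ j hj).1
      rw [hEe] at this
      simp at this
    have : (Γ i).count γ = 0 := by rw [← hWcard i γ, this]; rfl
    simp [this]
  · set m := E.max' hEne with hm
    have hmE : m ∈ E := E.max'_mem hEne
    have hmT : m < T := by
      have := Finset.mem_filter.mp hmE
      exact Finset.mem_range.mp this.1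
    have hWsub : ∀ (i : Fin S) (γ : A) (j : ℕ), j ∈ W i γ → j < P ws (m + 1) := by
      intro i γ j hj
      obtain ⟨hjE, h1, h2⟩ := hidxE i γ j hj
      have : idxf j ≤ m := E.le_max' _ hjE
      have : P ws (idxf j + 1) ≤ P ws (m + 1) := P_mono (by omega)
      omega
    rcases Nat.lt_or_ge (m + 1) T with hmT' | hmT'
    · -- delete the suffix after word m
      refine ⟨ws.take (m + 1), sides, ?_, ?_⟩
      · rw [List.length_take]
        omega
      · have heq : ws = ws.take (m + 1) ++ ws.drop (m + 1) := (List.take_append_drop _ _).symm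
        have hbne : ws.drop (m + 1) ≠ [] := by
          intro hd
          have : (ws.drop (m + 1)).length = ws.length - (m + 1) := List.length_drop
          rw [hd] at this
          simp at this
          omega
        have hflt : (ws.take (m + 1)).flatten.length = P ws (m + 1) :=
          take_flatten_length ws (m + 1)
        refine delete_suffix (by rw [← heq]; exact hnil) hbne (by rw [← heq]; exact hsol) ?_
        intro i γ
        have hsub : ↑(W i γ) ⊆ {j : ℕ | Wit (ws.take (m + 1) ++ ws.drop (m + 1)) sides γ i j ∧
            j < (ws.take (m + 1)).flatten.length} := by
          intro j hj
          simp only [Finset.mem_coe] at hj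
          constructor
          · rw [← heq]; exact hWmem i γ j hj
          · rw [hflt]; exact hWsub i γ j hj
        calc (Γ i).count γ = (↑(W i γ) : Set ℕ).ncard := by
              rw [Set.ncard_coe_finset]; exact (hWcard i γ).symm
          _ ≤ _ := Set.ncard_le_ncard hsub
              (((Set.finite_Iio (ws.take (m + 1)).flatten.length).subset
                (by rintro j ⟨-, h⟩; exact h)))
    · -- m = T - 1 : pigeonhole on word starts
      have hmT2 : m + 1 = T := by omega
      have h00 : (0 : ℕ) < ws.flatten.length := by
        have := P_lt_flatten hnil (show 0 < ws.length by omega)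
        omega
      set d0 : A := ws.flatten[0]'h00 with hd0
      set g : ℕ → A × Fin S × ℕ := fun t =>
        (ws.flatten.getD (P ws t) d0, sides (P ws t),
          (E.filter (fun e => t ≤ e)).card - 1) with hg
      have hk1 : ∀ t < T, 1 ≤ (E.filter (fun e => t ≤ e)).card := by
        intro t ht
        have : m ∈ E.filter (fun e => t ≤ e) := Finset.mem_filter.mpr ⟨hmE, by omega⟩
        exact Finset.card_pos.mpr ⟨m, this⟩
      have hkle : ∀ t : ℕ, (E.filter (fun e => t ≤ e)).card ≤ S * n :=
        fun t => le_trans (Finset.card_le_card (Finset.filter_subset _ _)) hEcard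
      -- not injective on range T
      have hna : ¬ Set.InjOn g ↑(Finset.range T) := by
        intro hinj
        have hmem : ∀ t ∈ Finset.range T,
            g t ∈ (Finset.univ : Finset A) ×ˢ ((Finset.univ : Finset (Fin S)) ×ˢ
              Finset.range (S * n)) := by
          intro t ht
          have htT := Finset.mem_range.mp ht
          refine Finset.mem_product.mpr ⟨Finset.mem_univ _, Finset.mem_product.mpr
            ⟨Finset.mem_univ _, Finset.mem_range.mpr ?_⟩⟩
          have h1 := hk1 t htT
          have h2 := hkle t
          simp only [hg]
          have hn1 : 1 ≤ S * n := le_trans h1 h2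
          omega
        have hcard := Finset.card_le_card_of_injOn g hmem hinj
        rw [Finset.card_range, Finset.card_product, Finset.card_product,
          Finset.card_range, Finset.card_univ, Finset.card_univ, Fintype.card_fin] at hcard
        have : Fintype.card A * (S * (S * n)) = S ^ 2 * Fintype.card A * n := by ring
        omega
      have hpair : ∃ t u, t < u ∧ t < T ∧ u < T ∧ g t = g u := by
        simp only [Set.InjOn, not_forall] at hna
        obtain ⟨t, ht, u, hu, hgtu, htu⟩ := hna
        simp only [Finset.coe_range, Set.mem_Iio] at ht hu
        rcases Nat.lt_or_ge t u with h | h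
        · exact ⟨t, u, h, ht, hu, hgtu⟩
        · exact ⟨u, t, by omega, hu, ht, hgtu.symm⟩
      obtain ⟨t, u, htu, htT, huT, hgtu⟩ := hpair
      -- decode the pair equality
      have hPtlt : P ws t < ws.flatten.length := P_lt_flatten hnil htT
      have hPult : P ws u < ws.flatten.length := P_lt_flatten hnil huT
      have hchar0 : ws.flatten[P ws t]? = ws.flatten[P ws u]? := by
        have h1 := congrArg Prod.fst hgtu
        simp only [hg] at h1
        rw [List.getD_eq_getElem?_getD, List.getD_eq_getElem?_getD,
          List.getElem?_eq_getElem hPtlt, List.getElem?_eq_getElem hPult] at h1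
        rw [List.getElem?_eq_getElem hPtlt, List.getElem?_eq_getElem hPult]
        simpa using h1
      have hside0 : sides (P ws t) = sides (P ws u) := by
        have h1 := congrArg (fun p => p.2.1) hgtu
        simpa [hg] using h1
      have hk0 : (E.filter (fun e => t ≤ e)).card = (E.filter (fun e => u ≤ e)).card := by
        have h1 := congrArg (fun p => p.2.2) hgtu
        simp only [hg] at h1
        have h2 := hk1 t htT
        have h3 := hk1 u huT
        omega
      -- the three pieces
      set a := ws.take t with ha
      set b := (ws.drop t).take (u - t) with hbb
      set c := ws.drop u with hc
      have hab : a ++ b = ws.take u := by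
        rw [ha, hbb, ← List.take_add, show t + (u - t) = u by omega]
      have habc : a ++ b ++ c = ws := by rw [hab, hc, List.take_append_drop]
      have hbne : b ≠ [] := by
        rw [hbb, ← List.length_pos_iff, List.length_take, List.length_drop]
        omega
      have hcne : c ≠ [] := by
        rw [hc, ← List.length_pos_iff, List.length_drop]
        omega
      have e1 : a.flatten.length = P ws t := take_flatten_length ws t
      have e2 : a.flatten.length + b.flatten.length = P ws u := by
        have : (a ++ b).flatten.length = P ws u := by rw [hab]; exact take_flatten_length ws u
        simpa using this
      -- no essential word index in [t, u)
      have hnoE : ∀ t', t' ∈ E → ¬ (t ≤ t' ∧ t' < u) := by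
        rintro t' ht' ⟨h1, h2⟩
        have hss : E.filter (fun e => u ≤ e) ⊂ E.filter (fun e => t ≤ e) := by
          constructor
          · intro e he
            have hee := Finset.mem_filter.mp he
            exact Finset.mem_filter.mpr ⟨hee.1, by have := hee.2; omega⟩
          · intro hsub
            have : t' ∈ E.filter (fun e => u ≤ e) :=
              hsub (Finset.mem_filter.mpr ⟨ht', h1⟩)
            have := (Finset.mem_filter.mp this).2
            omega
        have := Finset.card_lt_card hss
        omega
      -- apply the middle deletion
      have hsol' : IsLBSolution D Γ (a ++ b ++ c) sides := by rw [habc]; exact hsol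
      have hnil' : ∀ w ∈ a ++ b ++ c, w ≠ [] := by rw [habc]; exact hnil
      have hchar' : (a ++ b ++ c).flatten[a.flatten.length]? =
          (a ++ b ++ c).flatten[a.flatten.length + b.flatten.length]? := by
        rw [habc, e2, e1]
        exact hchar0
      have hside' : sides a.flatten.length =
          sides (a.flatten.length + b.flatten.length) := by
        rw [e2, e1]
        exact hside0
      have hwit' : ∀ (i : Fin S) (γ : A), (Γ i).count γ ≤
          {j : ℕ | Wit (a ++ b ++ c) sides γ i j ∧
            (j < a.flatten.length ∨ a.flatten.length + b.flatten.length ≤ j)}.ncard := by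
        intro i γ
        have hsub : ↑(W i γ) ⊆ {j : ℕ | Wit (a ++ b ++ c) sides γ i j ∧
            (j < a.flatten.length ∨ a.flatten.length + b.flatten.length ≤ j)} := by
          intro j hj
          simp only [Finset.mem_coe] at hj
          refine ⟨by rw [habc]; exact hWmem i γ j hj, ?_⟩
          rw [e2, e1]
          by_contra hcon
          push_neg at hcon
          obtain ⟨hj1, hj2⟩ := hcon
          obtain ⟨hjE, hp1, hp2⟩ := hidxE i γ j hj
          refine hnoE (idxf j) hjE ⟨?_, ?_⟩
          · by_contra htc
            push_neg at htc
            have : P ws (idxf j + 1) ≤ P ws t := P_mono (by omega)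
            omega
          · by_contra htc
            push_neg at htc
            have : P ws u ≤ P ws (idxf j) := P_mono (by omega)
            omega
        calc (Γ i).count γ = (↑(W i γ) : Set ℕ).ncard := by
              rw [Set.ncard_coe_finset]; exact (hWcard i γ).symm
          _ ≤ _ := Set.ncard_le_ncard hsub
              ((Set.finite_Iio (a ++ b ++ c).flatten.length).subset
                (by rintro j ⟨⟨hlt, -⟩, -⟩; exact hlt))
      refine ⟨a ++ c, _, ?_, delete_middle hnil' hbne hcne hsol' hchar' hside' hwit'⟩
      rw [List.length_append, ha, hc, List.length_take, List.length_drop]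
      omega
end LBAux

namespace LBAux

lemma main_aux {S n : ℕ} {A : Type} [Fintype A] [DecidableEq A]
    (D : Finset (List A)) (hD : ∀ w ∈ D, w ≠ [])
    (Γ : Fin S → Multiset A) (hΓ : ∀ i, Multiset.card (Γ i) = n) :
    ∀ (N : ℕ) (ws : List (List A)) (sides : ℕ → Fin S), ws.length ≤ N →
      IsLBSolution D Γ ws sides →
      ∃ (ws' : List (List A)) (sides' : ℕ → Fin S),
        ws'.length ≤ S ^ 2 * Fintype.card A * n ∧ IsLBSolution D Γ ws' sides' := by
  intro N
  induction N with
  | zero => intro ws sides hlen hsol; exact ⟨ws, sides, by omega, hsol⟩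
  | succ N ih =>
    intro ws sides hlen hsol
    rcases Nat.lt_or_ge (S ^ 2 * Fintype.card A * n) ws.length with hc | hc
    · obtain ⟨ws', sides', hlt, hsol'⟩ := shrink hD hΓ hsol hc
      exact ih ws' sides' (by omega) hsol'
    · exact ⟨ws, sides, hc, hsol⟩

end LBAux

/-- If an `S`-sides Letter Boxed puzzle whose sides all have size `n` admits a solution,
then it admits a solution using at most `S² · |Σ| · n` words. -/
theorem letterBoxed_short_solution {S n : ℕ} {A : Type} [Fintype A] [DecidableEq A]
    (D : Finset (List A)) (hD : ∀ w ∈ D, w ≠ [])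
    (Γ : Fin S → Multiset A) (hΓ : ∀ i, Multiset.card (Γ i) = n)
    (h : ∃ (ws : List (List A)) (sides : ℕ → Fin S), IsLBSolution D Γ ws sides) :
    ∃ (ws : List (List A)) (sides : ℕ → Fin S),
      ws.length ≤ S ^ 2 * Fintype.card A * n ∧ IsLBSolution D Γ ws sides := by
  obtain ⟨ws, sides, hsol⟩ := h
  exact LBAux.main_aux D hD Γ hΓ ws.length ws sides le_rfl hsol
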